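/- arXiv:2004.06051 — 3 statements merged into one kernel-verified Lean document; each statement's English description precedes it below -/
import Mathlib

section
/- Let g : ℝ → ℝ be twice differentiable and suppose that g''(v) + π² * g(v) = 2*π*sin(π*v) for all v ∈ [0,1], that g(0) = 1 and g(1) = 0, and that ∫_0^1 g(v)*sin(π*v) dv = 0. Then g(v) = (1−v)*cos(π*v) − (1/(2π))*sin(π*v) for all v ∈ [0,1]. -/
open Real MeasureTheory


lemma hasDerivAt_sinp (v : ℝ) :
    HasDerivAt (fun x : ℝ => Real.sin (π * x)) (π * Real.cos (π * v)) v := by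
  simpa [mul_comm] using ((hasDerivAt_id v).const_mul π).sin

lemma hasDerivAt_cosp (v : ℝ) :
    HasDerivAt (fun x : ℝ => Real.cos (π * x)) (-(π * Real.sin (π * v))) v := by
  simpa [mul_comm] using ((hasDerivAt_id v).const_mul π).cos

lemma hasDerivAt_f1 (v : ℝ) :
    HasDerivAt (fun x : ℝ => (1 - x) * Real.cos (π * x) - (1 / (2 * π)) * Real.sin (π * x))
      (-(3/2) * Real.cos (π * v) - π * (1 - v) * Real.sin (π * v)) v := by
  have h := (((hasDerivAt_id v).const_sub 1).mul (hasDerivAt_cosp v)).sub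
      ((hasDerivAt_sinp v).const_mul (1/(2*π)))
  refine h.congr_deriv (Eq.symm ?_)
  simp only [id_eq]
  field_simp
  ring

lemma hasDerivAt_f1d (v : ℝ) :
    HasDerivAt (fun x : ℝ => -(3/2) * Real.cos (π * x) - π * (1 - x) * Real.sin (π * x))
      ((5*π/2) * Real.sin (π * v) - π^2 * (1 - v) * Real.cos (π * v)) v := by
  have h := ((hasDerivAt_cosp v).const_mul (-(3/2:ℝ))).sub
      ((((hasDerivAt_id v).const_sub 1).const_mul π).mul (hasDerivAt_sinp v))
  refine h.congr_deriv (Eq.symm ?_)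
  simp only [id_eq]
  ring

lemma int_f1_sin :
    ∫ v in (0:ℝ)..1,
      ((1 - v) * Real.cos (π * v) - (1 / (2 * π)) * Real.sin (π * v)) * Real.sin (π * v) = 0 := by
  have key : ∀ v ∈ Set.uIcc (0:ℝ) 1,
      HasDerivAt (fun x : ℝ => (2*(1-x)*Real.sin (π*x)^2 - 1)/(4*π))
        (((1 - v) * Real.cos (π * v) - (1 / (2 * π)) * Real.sin (π * v)) * Real.sin (π * v)) v := by
    intro v _
    have h := (((((hasDerivAt_id v).const_sub 1).const_mul 2).mul
        ((hasDerivAt_sinp v).pow 2)).sub_const 1).div_const (4*π)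
    refine h.congr_deriv (Eq.symm ?_)
    simp only [id_eq, Pi.pow_apply]
    field_simp
    ring
  have hint : IntervalIntegrable
      (fun v : ℝ => ((1 - v) * Real.cos (π * v) - (1 / (2 * π)) * Real.sin (π * v)) * Real.sin (π * v))
      volume 0 1 := (Continuous.intervalIntegrable (by fun_prop) 0 1)
  rw [intervalIntegral.integral_eq_sub_of_hasDerivAt key hint]
  simp [Real.sin_pi]

lemma int_sinp_sq : ∫ v in (0:ℝ)..1, Real.sin (π*v)^2 = 1/2 := by
  have key : ∀ v ∈ Set.uIcc (0:ℝ) 1,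
      HasDerivAt (fun x : ℝ => x/2 - Real.sin (π*x) * Real.cos (π*x) / (2*π))
        (Real.sin (π*v)^2) v := by
    intro v _
    have h := ((hasDerivAt_id v).div_const 2).sub
        (((hasDerivAt_sinp v).mul (hasDerivAt_cosp v)).div_const (2*π))
    refine h.congr_deriv (Eq.symm ?_)
    have hpy := Real.sin_sq_add_cos_sq (π*v)
    field_simp
    linear_combination hpy
  have hint : IntervalIntegrable (fun v : ℝ => Real.sin (π*v)^2) volume 0 1 :=
    (Continuous.intervalIntegrable (by fun_prop) 0 1)
  rw [intervalIntegral.integral_eq_sub_of_hasDerivAt key hint]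
  simp [Real.sin_pi]


/-- Uniqueness: a twice differentiable function `g` with `g'' + π² g = 2π sin(πv)` on `[0,1]`,
`g(0) = 1`, `g(1) = 0` and `∫_0^1 g(v) sin(πv) dv = 0` must equal
`f₁(v) = (1−v)·cos(πv) − (1/(2π))·sin(πv)` on `[0,1]`. -/
theorem eq_f₁_of_ode_boundary_orth (g : ℝ → ℝ)
    (hg : Differentiable ℝ g) (hg' : Differentiable ℝ (deriv g))
    (hode : ∀ v ∈ Set.Icc (0:ℝ) 1,
      deriv (deriv g) v + π ^ 2 * g v = 2 * π * Real.sin (π * v))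
    (h0 : g 0 = 1) (h1 : g 1 = 0)
    (horth : ∫ v in (0:ℝ)..1, g v * Real.sin (π * v) = 0) :
    ∀ v ∈ Set.Icc (0:ℝ) 1,
      g v = (1 - v) * Real.cos (π * v) - (1 / (2 * π)) * Real.sin (π * v) := by
  have hπ : (π:ℝ) ≠ 0 := Real.pi_ne_zero
  set h : ℝ → ℝ := fun x => g x - ((1 - x) * Real.cos (π * x) - (1 / (2 * π)) * Real.sin (π * x))
    with hhdef
  set H : ℝ → ℝ := fun x => deriv g x - (-(3/2) * Real.cos (π * x) - π * (1 - x) * Real.sin (π * x))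
    with hHdef
  have hH : ∀ v, HasDerivAt h (H v) v := fun v => ((hg v).hasDerivAt).sub (hasDerivAt_f1 v)
  have hH' : ∀ v, HasDerivAt H
      (deriv (deriv g) v - ((5*π/2) * Real.sin (π * v) - π^2 * (1 - v) * Real.cos (π * v))) v :=
    fun v => ((hg' v).hasDerivAt).sub (hasDerivAt_f1d v)
  set W1 : ℝ → ℝ := fun v => H v * Real.sin (π*v) - π * (h v * Real.cos (π*v)) with hW1def
  set W2 : ℝ → ℝ := fun v => H v * Real.cos (π*v) + π * (h v * Real.sin (π*v)) with hW2def
  have hW1 : ∀ v ∈ Set.Icc (0:ℝ) 1, HasDerivAt W1 0 v := by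
    intro v hv
    have e := ((hH' v).mul (hasDerivAt_sinp v)).sub (((hH v).mul (hasDerivAt_cosp v)).const_mul π)
    refine e.congr_deriv (Eq.symm ?_)
    have hgpp : deriv (deriv g) v = 2*π*Real.sin (π*v) - π^2 * g v := by linarith [hode v hv]
    rw [hgpp]
    simp only [hhdef, hHdef]
    field_simp
    ring
  have hW2 : ∀ v ∈ Set.Icc (0:ℝ) 1, HasDerivAt W2 0 v := by
    intro v hv
    have e := ((hH' v).mul (hasDerivAt_cosp v)).add (((hH v).mul (hasDerivAt_sinp v)).const_mul π)
    refine e.congr_deriv (Eq.symm ?_)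
    have hgpp : deriv (deriv g) v = 2*π*Real.sin (π*v) - π^2 * g v := by linarith [hode v hv]
    rw [hgpp]
    simp only [hhdef, hHdef]
    field_simp
    ring
  have hhdiff : Differentiable ℝ h := fun v => (hH v).differentiableAt
  have hHdiff : Differentiable ℝ H := fun v => (hH' v).differentiableAt
  have hhc : Continuous h := hhdiff.continuous
  have hHc : Continuous H := hHdiff.continuous
  have hW1c : Continuous W1 := by
    rw [hW1def]; fun_prop
  have hW2c : Continuous W2 := by
    rw [hW2def]; fun_prop
  have key1 : ∀ x ∈ Set.Icc (0:ℝ) 1, W1 x = W1 0 :=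
    constant_of_has_deriv_right_zero hW1c.continuousOn
      (fun x hx => (hW1 x ⟨hx.1, hx.2.le⟩).hasDerivWithinAt)
  have key2 : ∀ x ∈ Set.Icc (0:ℝ) 1, W2 x = W2 0 :=
    constant_of_has_deriv_right_zero hW2c.continuousOn
      (fun x hx => (hW2 x ⟨hx.1, hx.2.le⟩).hasDerivWithinAt)
  have hh0 : h 0 = 0 := by simp [hhdef, h0]
  have hW10 : W1 0 = 0 := by simp [hW1def, hh0]
  have hW20 : W2 0 = H 0 := by simp [hW2def, hh0]
  have hval : ∀ v ∈ Set.Icc (0:ℝ) 1, h v = W2 0 * Real.sin (π*v) / π := by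
    intro v hv
    have e1 := key1 v hv
    rw [hW10] at e1
    have e2 := key2 v hv
    have hpy := Real.sin_sq_add_cos_sq (π*v)
    simp only [hW1def, hW2def] at e1 e2
    field_simp
    linear_combination Real.sin (π*v) * e2 - Real.cos (π*v) * e1 - π * h v * hpy
  -- integral step
  have hcont_gs : Continuous fun v => g v * Real.sin (π*v) := by have := hg.continuous; fun_prop
  have hcont_f1s : Continuous fun v : ℝ =>
      ((1 - v) * Real.cos (π * v) - (1 / (2 * π)) * Real.sin (π * v)) * Real.sin (π*v) := by
    fun_prop
  have hsub : ∫ v in (0:ℝ)..1, h v * Real.sin (π*v)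
      = (∫ v in (0:ℝ)..1, g v * Real.sin (π*v))
        - ∫ v in (0:ℝ)..1, ((1 - v) * Real.cos (π * v) - (1 / (2 * π)) * Real.sin (π * v)) * Real.sin (π*v) := by
    rw [← intervalIntegral.integral_sub (hcont_gs.intervalIntegrable 0 1)
      (hcont_f1s.intervalIntegrable 0 1)]
    simp only [hhdef, sub_mul]
  rw [horth, int_f1_sin, zero_sub, neg_zero] at hsub
  have hsub2 : ∫ v in (0:ℝ)..1, h v * Real.sin (π*v) = (W2 0 / π) * (1/2) := by
    have e : ∫ v in (0:ℝ)..1, h v * Real.sin (π*v)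
        = ∫ v in (0:ℝ)..1, (W2 0 / π) * Real.sin (π*v)^2 := by
      apply intervalIntegral.integral_congr
      intro v hv
      rw [Set.uIcc_of_le zero_le_one] at hv
      dsimp only
      rw [hval v hv]; ring
    rw [e, intervalIntegral.integral_const_mul, int_sinp_sq]
  rw [hsub] at hsub2
  have hK : W2 0 = 0 := by
    field_simp at hsub2
    linarith
  intro v hv
  have := hval v hv
  rw [hK] at this
  simp only [hhdef] at this
  have : g v - ((1 - v) * Real.cos (π * v) - (1 / (2 * π)) * Real.sin (π * v)) = 0 := by
    rw [this]; ring
  linarith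
end

section
/- The function f₂ satisfies f₂''(v) + π² * f₂(v) = 2*π*f₁(v) for every real v, together with the boundary values f₂(0) = 0 and f₂(1) = 0. -/
open Real

/-- The first-order correction term `f₁(v) = (1−v)·cos(πv) − (1/(2π))·sin(πv)`. -/
noncomputable def f₁ (v : ℝ) : ℝ :=
  (1 - v) * Real.cos (π * v) - (1 / (2 * π)) * Real.sin (π * v)

/-- The second-order correction term
`f₂(v) = (−v²/2 + v − (1/2 + 3/(8π²)))·sin(πv)`. -/
noncomputable def f₂ (v : ℝ) : ℝ :=
  (-v ^ 2 / 2 + v - (1 / 2 + 3 / (8 * π ^ 2))) * Real.sin (π * v)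

noncomputable def f₂' (v : ℝ) : ℝ :=
  (-v + 1) * Real.sin (π * v)
    + (-v ^ 2 / 2 + v - (1 / 2 + 3 / (8 * π ^ 2))) * (π * Real.cos (π * v))

lemma hasDerivAt_inner (v : ℝ) : HasDerivAt (fun v : ℝ => π * v) π v := by
  simpa using (hasDerivAt_id v).const_mul π

lemma hasDerivAt_sinpi (v : ℝ) :
    HasDerivAt (fun v : ℝ => Real.sin (π * v)) (π * Real.cos (π * v)) v := by
  simpa [mul_comm] using (hasDerivAt_inner v).sin

lemma hasDerivAt_cospi (v : ℝ) :
    HasDerivAt (fun v : ℝ => π * Real.cos (π * v)) (-(π ^ 2 * Real.sin (π * v))) v := by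
  have := ((hasDerivAt_inner v).cos).const_mul π
  exact this.congr_deriv (by ring)

lemma hasDerivAt_poly (v : ℝ) :
    HasDerivAt (fun v : ℝ => -v ^ 2 / 2 + v - (1 / 2 + 3 / (8 * π ^ 2))) (-v + 1) v := by
  have h := (((hasDerivAt_pow 2 v).neg.div_const 2).add (hasDerivAt_id v)).sub_const
    (1 / 2 + 3 / (8 * π ^ 2))
  exact h.congr_deriv (by push_cast; ring)

lemma hasDerivAt_f₂ (v : ℝ) : HasDerivAt f₂ (f₂' v) v := by
  unfold f₂ f₂'
  exact (hasDerivAt_poly v).mul (hasDerivAt_sinpi v)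

lemma hasDerivAt_f₂' (v : ℝ) :
    HasDerivAt f₂' (-Real.sin (π * v) + 2 * π * (1 - v) * Real.cos (π * v)
      - π ^ 2 * ((-v ^ 2 / 2 + v - (1 / 2 + 3 / (8 * π ^ 2))) * Real.sin (π * v))) v := by
  have hq : HasDerivAt (fun v : ℝ => -v + 1) (-1) v := by
    simpa using (hasDerivAt_id v).neg.add_const 1
  have h := (hq.mul (hasDerivAt_sinpi v)).add ((hasDerivAt_poly v).mul (hasDerivAt_cospi v))
  have he : HasDerivAt f₂' ((-1) * Real.sin (π * v) + (-v + 1) * (π * Real.cos (π * v))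
      + ((-v + 1) * (π * Real.cos (π * v))
        + (-v ^ 2 / 2 + v - (1 / 2 + 3 / (8 * π ^ 2))) * -(π ^ 2 * Real.sin (π * v)))) v := h
  convert he using 1
  ring

/-- `f₂'' + π² f₂ = 2π f₁` on all of `ℝ`, with `f₂(0) = 0` and `f₂(1) = 0`. -/
theorem f₂_ode_and_boundary :
    (∀ v : ℝ, deriv (deriv f₂) v + π ^ 2 * f₂ v = 2 * π * f₁ v) ∧
      f₂ 0 = 0 ∧ f₂ 1 = 0 := by
  refine ⟨fun v => ?_, by simp [f₂], by simp [f₂, Real.sin_pi]⟩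
  have hd : deriv f₂ = f₂' := funext fun x => (hasDerivAt_f₂ x).deriv
  rw [hd, (hasDerivAt_f₂' v).deriv, f₂, f₁]
  have hπ : π ≠ 0 := Real.pi_ne_zero
  field_simp
  ring
end

section
/- Let r ∈ (0,1), ε > 0, t > 0, σ ∈ ℝ, and let θ be a twice continuously differentiable real-valued function on an open neighborhood of Ω̃ = {(x,v) ∈ ℝ² : 0 ≤ v ≤ 1, −r^(2v)/2 ≤ x ≤ r^(2v)/2}. Suppose that (i) r^(2v)*θ_xx + ε²*( (3/4)*θ + 2*θ_v/ln(1/r) + θ_vv/(ln(1/r))² ) = 0 at every point of Ω̃, and (ii) for every v ∈ [0,1] and each sign ±: ±θ_x(±r^(2v)/2, v) + ε²*( θ(±r^(2v)/2, v)/2 + θ_v(±r^(2v)/2, v)/ln(1/r) ) = ε² * √(1 + ε²*r^(2v)) * (σ/t) * θ(±r^(2v)/2, v). Define m(v) = r^(−2v) * ∫_{−r^(2v)/2}^{r^(2v)/2} θ_v(x,v) dx and m̄(v) = r^(−2v) * ∫_{−r^(2v)/2}^{r^(2v)/2} θ(x,v) dx. Then for every v ∈ (0,1): −m'(v) = (ln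 r)² * ( ( θ(r^(2v)/2, v) + θ(−r^(2v)/2, v) ) * ( (σ/t)*√(1 + ε²*r^(2v)) − 1/2 ) + (3/4)*m̄(v) ). -/
open Real MeasureTheory

private lemma clm_pair_apply (Lm : ℝ × ℝ →L[ℝ] ℝ) (A : ℝ) :
    Lm (A, 1) = A * Lm (1, 0) + Lm (0, 1) := by
  have h : (A, (1:ℝ)) = A • ((1:ℝ), (0:ℝ)) + ((0:ℝ), (1:ℝ)) := by
    simp [Prod.ext_iff]
  rw [h, map_add, Lm.map_smul, smul_eq_mul]

/-- The averaged ODE for the horizontal mean of a Steklov eigenfunction on the cuspidal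
domain in `(x,v)`-coordinates: if `θ` is `C²` on an open neighborhood of
`Ω̃ = {(x,v) : 0 ≤ v ≤ 1, −r^(2v)/2 ≤ x ≤ r^(2v)/2}`, satisfies the interior equation
`r^(2v) θ_xx + ε²((3/4)θ + 2θ_v/ln(1/r) + θ_vv/(ln(1/r))²) = 0` on `Ω̃` and the
Steklov-type lateral boundary conditions
`±θ_x(±r^(2v)/2, v) + ε²(θ/2 + θ_v/ln(1/r)) = ε²√(1+ε²r^(2v)) (σ/t) θ` at `x = ±r^(2v)/2`,
then the horizontal mean `m(v) = r^(−2v) ∫ θ_v(x,v) dx` satisfies, for `v ∈ (0,1)`,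
`−m'(v) = (ln r)² ((θ(r^(2v)/2,v) + θ(−r^(2v)/2,v))((σ/t)√(1+ε²r^(2v)) − 1/2) + (3/4) m̄(v))`,
where `m̄(v) = r^(−2v) ∫ θ(x,v) dx`. -/
theorem averaged_ode_horizontal_mean (r ε t σ : ℝ) (hr : r ∈ Set.Ioo (0:ℝ) 1)
    (hε : 0 < ε) (ht : 0 < t) (θ : ℝ → ℝ → ℝ) (U : Set (ℝ × ℝ)) (hU : IsOpen U)
    (hΩU : {p : ℝ × ℝ | p.2 ∈ Set.Icc (0:ℝ) 1 ∧
      p.1 ∈ Set.Icc (-(r ^ (2 * p.2)) / 2) (r ^ (2 * p.2) / 2)} ⊆ U)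
    (hθ : ContDiffOn ℝ 2 (fun p : ℝ × ℝ => θ p.1 p.2) U)
    (hint : ∀ v ∈ Set.Icc (0:ℝ) 1, ∀ x ∈ Set.Icc (-(r ^ (2 * v)) / 2) (r ^ (2 * v) / 2),
      r ^ (2 * v) * deriv (deriv fun s => θ s v) x +
        ε ^ 2 * ((3 / 4) * θ x v + 2 * deriv (fun w => θ x w) v / Real.log (1 / r) +
          deriv (deriv fun w => θ x w) v / (Real.log (1 / r)) ^ 2) = 0)
    (hbdryPlus : ∀ v ∈ Set.Icc (0:ℝ) 1,
      deriv (fun s => θ s v) (r ^ (2 * v) / 2) +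
        ε ^ 2 * (θ (r ^ (2 * v) / 2) v / 2 +
          deriv (fun w => θ (r ^ (2 * v) / 2) w) v / Real.log (1 / r)) =
      ε ^ 2 * Real.sqrt (1 + ε ^ 2 * r ^ (2 * v)) * (σ / t) * θ (r ^ (2 * v) / 2) v)
    (hbdryMinus : ∀ v ∈ Set.Icc (0:ℝ) 1,
      -deriv (fun s => θ s v) (-(r ^ (2 * v)) / 2) +
        ε ^ 2 * (θ (-(r ^ (2 * v)) / 2) v / 2 +
          deriv (fun w => θ (-(r ^ (2 * v)) / 2) w) v / Real.log (1 / r)) =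
      ε ^ 2 * Real.sqrt (1 + ε ^ 2 * r ^ (2 * v)) * (σ / t) * θ (-(r ^ (2 * v)) / 2) v) :
    ∀ v ∈ Set.Ioo (0:ℝ) 1,
      HasDerivAt
        (fun v : ℝ => r ^ (-(2 * v)) *
          ∫ x in (-(r ^ (2 * v)) / 2)..(r ^ (2 * v) / 2), deriv (fun w => θ x w) v)
        (-((Real.log r) ^ 2 *
          ((θ (r ^ (2 * v) / 2) v + θ (-(r ^ (2 * v)) / 2) v) *
              ((σ / t) * Real.sqrt (1 + ε ^ 2 * r ^ (2 * v)) - 1 / 2) +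
            (3 / 4) * (r ^ (-(2 * v)) *
              ∫ x in (-(r ^ (2 * v)) / 2)..(r ^ (2 * v) / 2), θ x v)))) v := by
  obtain ⟨hr0, hr1⟩ := hr
  have hlogr : Real.log r < 0 := Real.log_neg hr0 hr1
  set L : ℝ := Real.log (1 / r) with hL_def
  have hL : L = -Real.log r := by rw [hL_def, one_div, Real.log_inv]
  have hLpos : 0 < L := by rw [hL]; linarith
  have hL0 : L ≠ 0 := ne_of_gt hLpos
  have he0 : (ε:ℝ) ^ 2 ≠ 0 := by positivity
  set f : ℝ × ℝ → ℝ := fun p => θ p.1 p.2 with hf_def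
  -- basic facts about c v = r ^ (2v)
  have hcpos : ∀ v : ℝ, 0 < r ^ (2 * v) := fun v => Real.rpow_pos_of_pos hr0 _
  have hcone : ∀ v ∈ Set.Icc (0:ℝ) 1, r ^ (2 * v) ≤ 1 := by
    intro v hv
    exact Real.rpow_le_one hr0.le hr1.le (by nlinarith [hv.1])
  have hcont_c : Continuous fun s : ℝ => r ^ (2 * s) := by
    have h1 : (fun s : ℝ => r ^ (2 * s)) = fun s => Real.exp (Real.log r * (2 * s)) :=
      funext fun s => Real.rpow_def_of_pos hr0 _
    rw [h1]; fun_prop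
  have hcderiv : ∀ v : ℝ, HasDerivAt (fun w : ℝ => r ^ (2 * w)) (2 * Real.log r * r ^ (2 * v)) v := by
    intro v
    have h1 : HasDerivAt (fun w : ℝ => 2 * w) 2 v := by
      simpa using (hasDerivAt_id v).const_mul 2
    have h2 := (Real.hasStrictDerivAt_const_rpow hr0 (2 * v)).hasDerivAt.comp v h1
    rw [show 2 * Real.log r * r ^ (2 * v) = r ^ (2 * v) * Real.log r * 2 by ring]
    exact h2
  -- partial derivatives
  have hdfC : ContDiffOn ℝ 1 (fderiv ℝ f) U := hθ.fderiv_of_isOpen hU (by norm_num)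
  set fx : ℝ × ℝ → ℝ := fun p => fderiv ℝ f p (1, 0) with hfx_def
  set fv : ℝ × ℝ → ℝ := fun p => fderiv ℝ f p (0, 1) with hfv_def
  have hfxC : ContDiffOn ℝ 1 fx U := hdfC.clm_apply contDiffOn_const
  have hfvC : ContDiffOn ℝ 1 fv U := hdfC.clm_apply contDiffOn_const
  set fxx : ℝ × ℝ → ℝ := fun p => fderiv ℝ fx p (1, 0) with hfxx_def
  set fvx : ℝ × ℝ → ℝ := fun p => fderiv ℝ fv p (1, 0) with hfvx_def
  set fvv : ℝ × ℝ → ℝ := fun p => fderiv ℝ fv p (0, 1) with hfvv_def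
  have hfxxC : ContinuousOn fxx U :=
    ((hfxC.fderiv_of_isOpen (m := 0) hU (by norm_num)).clm_apply contDiffOn_const).continuousOn
  have hfvxC : ContinuousOn fvx U :=
    ((hfvC.fderiv_of_isOpen (m := 0) hU (by norm_num)).clm_apply contDiffOn_const).continuousOn
  have hfvvC : ContinuousOn fvv U :=
    ((hfvC.fderiv_of_isOpen (m := 0) hU (by norm_num)).clm_apply contDiffOn_const).continuousOn
  have hfd : ∀ p ∈ U, HasFDerivAt f (fderiv ℝ f p) p := fun p hp =>
    ((hθ.differentiableOn (by norm_num)).differentiableAt (hU.mem_nhds hp)).hasFDerivAt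
  have hfxd : ∀ p ∈ U, HasFDerivAt fx (fderiv ℝ fx p) p := fun p hp =>
    ((hfxC.differentiableOn one_ne_zero).differentiableAt (hU.mem_nhds hp)).hasFDerivAt
  have hfvd : ∀ p ∈ U, HasFDerivAt fv (fderiv ℝ fv p) p := fun p hp =>
    ((hfvC.differentiableOn one_ne_zero).differentiableAt (hU.mem_nhds hp)).hasFDerivAt
  -- slice derivatives
  have slice_v : ∀ (g : ℝ × ℝ → ℝ) (x v : ℝ), HasFDerivAt g (fderiv ℝ g (x, v)) (x, v) →
      HasDerivAt (fun w => g (x, w)) (fderiv ℝ g (x, v) (0, 1)) v := by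
    intro g x v hg
    have hφ : HasDerivAt (fun w : ℝ => ((x : ℝ), w)) ((0:ℝ), (1:ℝ)) v :=
      (hasDerivAt_const _ _).prodMk (hasDerivAt_id _)
    exact hg.comp_hasDerivAt v hφ
  have slice_x : ∀ (g : ℝ × ℝ → ℝ) (x v : ℝ), HasFDerivAt g (fderiv ℝ g (x, v)) (x, v) →
      HasDerivAt (fun s => g (s, v)) (fderiv ℝ g (x, v) (1, 0)) x := by
    intro g x v hg
    have hφ : HasDerivAt (fun s : ℝ => (s, (v : ℝ))) ((1:ℝ), (0:ℝ)) x :=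
      (hasDerivAt_id _).prodMk (hasDerivAt_const _ _)
    exact hg.comp_hasDerivAt x hφ
  have hderiv_w : ∀ x v : ℝ, (x, v) ∈ U → HasDerivAt (fun w => θ x w) (fv (x, v)) v :=
    fun x v h => slice_v f x v (hfd _ h)
  have hderiv_s : ∀ x v : ℝ, (x, v) ∈ U → HasDerivAt (fun s => θ s v) (fx (x, v)) x :=
    fun x v h => slice_x f x v (hfd _ h)
  have hderiv_fv_w : ∀ x v : ℝ, (x, v) ∈ U → HasDerivAt (fun w => fv (x, w)) (fvv (x, v)) v :=
    fun x v h => slice_v fv x v (hfvd _ h)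
  have hderiv_fv_s : ∀ x v : ℝ, (x, v) ∈ U → HasDerivAt (fun s => fv (s, v)) (fvx (x, v)) x :=
    fun x v h => slice_x fv x v (hfvd _ h)
  have hderiv_fx_s : ∀ x v : ℝ, (x, v) ∈ U → HasDerivAt (fun s => fx (s, v)) (fxx (x, v)) x :=
    fun x v h => slice_x fx x v (hfxd _ h)
  have hdw : ∀ x v : ℝ, (x, v) ∈ U → deriv (fun w => θ x w) v = fv (x, v) :=
    fun x v h => (hderiv_w x v h).deriv
  have hds : ∀ x v : ℝ, (x, v) ∈ U → deriv (fun s => θ s v) x = fx (x, v) :=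
    fun x v h => (hderiv_s x v h).deriv
  have hdww : ∀ x v : ℝ, (x, v) ∈ U → deriv (deriv fun w => θ x w) v = fvv (x, v) := by
    intro x v h
    have hcont : Continuous fun w : ℝ => ((x : ℝ), w) := by fun_prop
    have hev : (deriv fun w => θ x w) =ᶠ[nhds v] fun w => fv (x, w) := by
      filter_upwards [hcont.continuousAt.preimage_mem_nhds (hU.mem_nhds h)] with w hw
      exact hdw x w hw
    rw [hev.deriv_eq]
    exact (hderiv_fv_w x v h).deriv
  have hdss : ∀ x v : ℝ, (x, v) ∈ U → deriv (deriv fun s => θ s v) x = fxx (x, v) := by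
    intro x v h
    have hcont : Continuous fun s : ℝ => (s, (v : ℝ)) := by fun_prop
    have hev : (deriv fun s => θ s v) =ᶠ[nhds x] fun s => fx (s, v) := by
      filter_upwards [hcont.continuousAt.preimage_mem_nhds (hU.mem_nhds h)] with s hs
      exact hds s v hs
    rw [hev.deriv_eq]
    exact (hderiv_fx_s x v h).deriv
  have hΩ : ∀ {x v : ℝ}, v ∈ Set.Icc (0:ℝ) 1 →
      x ∈ Set.Icc (-(r ^ (2 * v)) / 2) (r ^ (2 * v) / 2) → (x, v) ∈ U :=
    fun hv hx => hΩU ⟨hv, hx⟩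
  have hmemscale : ∀ v ∈ Set.Icc (0:ℝ) 1, ∀ y ∈ Set.Icc (-(1:ℝ)/2) (1/2),
      (r ^ (2 * v) * y, v) ∈ U := by
    intro v hv y hy
    refine hΩ hv ⟨?_, ?_⟩
    · nlinarith [hcpos v, hy.1]
    · nlinarith [hcpos v, hy.2]
  intro v₀ hv₀
  obtain ⟨hv₀0, hv₀1⟩ := hv₀
  have hv₀' : v₀ ∈ Set.Icc (0:ℝ) 1 := ⟨hv₀0.le, hv₀1.le⟩
  set c₀ : ℝ := r ^ (2 * v₀) with hc₀
  have hc₀pos : 0 < c₀ := hcpos v₀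
  have hc₀ne : c₀ ≠ 0 := ne_of_gt hc₀pos
  set δ : ℝ := min v₀ (1 - v₀) with hδ
  have hδpos : 0 < δ := lt_min hv₀0 (by linarith)
  have hball : ∀ v ∈ Metric.ball v₀ δ, v ∈ Set.Ioo (0:ℝ) 1 := by
    intro v hv
    rw [Metric.mem_ball, Real.dist_eq] at hv
    have h1 := abs_lt.mp hv
    have h2 : δ ≤ v₀ := min_le_left _ _
    have h3 : δ ≤ 1 - v₀ := min_le_right _ _
    constructor <;> [linarith [h1.1]; linarith [h1.2]]
  set Fam : ℝ → ℝ → ℝ := fun v y => fv (r ^ (2 * v) * y, v) with hFam_def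
  set Fam' : ℝ → ℝ → ℝ := fun v y =>
    (2 * Real.log r * r ^ (2 * v) * y) * fvx (r ^ (2 * v) * y, v) + fvv (r ^ (2 * v) * y, v)
    with hFam'_def
  have hFamDeriv : ∀ y ∈ Set.Icc (-(1:ℝ)/2) (1/2), ∀ v ∈ Set.Icc (0:ℝ) 1,
      HasDerivAt (fun v => Fam v y) (Fam' v y) v := by
    intro y hy v hv
    have hmem : (r ^ (2 * v) * y, v) ∈ U := hmemscale v hv y hy
    have hφ : HasDerivAt (fun v : ℝ => (r ^ (2 * v) * y, v))
        ((2 * Real.log r * r ^ (2 * v) * y, 1)) v := by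
      exact ((hcderiv v).mul_const y).prodMk (hasDerivAt_id v)
    have h2 := (hfvd _ hmem).comp_hasDerivAt (f := fun v : ℝ => (r ^ (2 * v) * y, v)) v hφ
    have h3 : fderiv ℝ fv (r ^ (2 * v) * y, v) (2 * Real.log r * r ^ (2 * v) * y, 1)
        = Fam' v y := by
      rw [clm_pair_apply]
    rw [← h3]
    exact h2
  -- compact set and bounds
  set K : Set (ℝ × ℝ) :=
    (fun q : ℝ × ℝ => (r ^ (2 * q.1) * q.2, q.1)) '' (Set.Icc 0 1 ×ˢ Set.Icc (-(1:ℝ)/2) (1/2))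
    with hK_def
  have hKcomp : IsCompact K := by
    apply (isCompact_Icc.prod isCompact_Icc).image
    exact ((hcont_c.comp continuous_fst).mul continuous_snd).prodMk continuous_fst
  have hKU : K ⊆ U := by
    rintro p ⟨⟨v, y⟩, ⟨hv, hy⟩, rfl⟩
    exact hmemscale v hv y hy
  have hKmem : ∀ v ∈ Set.Icc (0:ℝ) 1, ∀ y ∈ Set.Icc (-(1:ℝ)/2) (1/2),
      (r ^ (2 * v) * y, v) ∈ K := by
    intro v hv y hy
    exact ⟨(v, y), ⟨hv, hy⟩, rfl⟩
  obtain ⟨C1, hC1⟩ := hKcomp.exists_bound_of_continuousOn (hfvxC.mono hKU)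
  obtain ⟨C2, hC2⟩ := hKcomp.exists_bound_of_continuousOn (hfvvC.mono hKU)
  set M : ℝ := |2 * Real.log r| * max C1 0 + max C2 0 with hM_def
  have hIsub : Set.uIoc (-(1:ℝ)/2) (1/2) ⊆ Set.Icc (-(1:ℝ)/2) (1/2) := by
    rw [Set.uIoc_of_le (by norm_num : -(1:ℝ)/2 ≤ 1/2)]
    exact Set.Ioc_subset_Icc_self
  have hFam'_bound : ∀ y ∈ Set.uIoc (-(1:ℝ)/2) (1/2), ∀ v ∈ Metric.ball v₀ δ,
      ‖Fam' v y‖ ≤ M := by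
    intro y hy v hv
    have hyI : y ∈ Set.Icc (-(1:ℝ)/2) (1/2) := hIsub hy
    have hvI : v ∈ Set.Icc (0:ℝ) 1 := Set.Ioo_subset_Icc_self (hball v hv)
    have hmemK : (r ^ (2 * v) * y, v) ∈ K := hKmem v hvI y hyI
    have hb1 : ‖fvx (r ^ (2 * v) * y, v)‖ ≤ max C1 0 :=
      le_trans (hC1 _ hmemK) (le_max_left C1 0)
    have hb2 : ‖fvv (r ^ (2 * v) * y, v)‖ ≤ max C2 0 :=
      le_trans (hC2 _ hmemK) (le_max_left _ _)
    have hy1 : |y| ≤ 1 := by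
      rw [abs_le]; constructor
      · linarith [hyI.1]
      · linarith [hyI.2]
    have hcabs : |r ^ (2 * v)| ≤ 1 := by
      rw [abs_of_pos (hcpos v)]; exact hcone v hvI
    have hA : |2 * Real.log r * r ^ (2 * v) * y| ≤ |2 * Real.log r| := by
      rw [abs_mul, abs_mul]
      have hAB : (0:ℝ) ≤ |2 * Real.log r| * |r ^ (2 * v)| := by positivity
      have h2 := mul_le_mul_of_nonneg_left hy1 hAB
      have h1 := mul_le_mul_of_nonneg_left hcabs (abs_nonneg (2 * Real.log r))
      rw [mul_one] at h2 h1
      linarith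
    calc ‖Fam' v y‖ ≤ ‖(2 * Real.log r * r ^ (2 * v) * y) * fvx (r ^ (2 * v) * y, v)‖
          + ‖fvv (r ^ (2 * v) * y, v)‖ := norm_add_le _ _
      _ ≤ |2 * Real.log r| * max C1 0 + max C2 0 := by
          apply add_le_add _ hb2
          rw [Real.norm_eq_abs, abs_mul]
          have h0C : (0:ℝ) ≤ max C1 0 := le_max_right _ _
          exact mul_le_mul hA (by simpa [Real.norm_eq_abs] using hb1) (abs_nonneg _)
            (abs_nonneg _)
      _ = M := rfl
  -- continuity of families
  have hmapcont : ∀ v : ℝ, Continuous fun y : ℝ => (r ^ (2 * v) * y, v) := by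
    intro v; fun_prop
  have hFamCont : ∀ v ∈ Set.Icc (0:ℝ) 1, ContinuousOn (Fam v) (Set.Icc (-(1:ℝ)/2) (1/2)) := by
    intro v hv
    exact (hfvC.continuousOn).comp (hmapcont v).continuousOn (fun y hy => hmemscale v hv y hy)
  have hFam'Cont : ∀ v ∈ Set.Icc (0:ℝ) 1,
      ContinuousOn (Fam' v) (Set.Icc (-(1:ℝ)/2) (1/2)) := by
    intro v hv
    have h1 : ContinuousOn (fun y => fvx (r ^ (2 * v) * y, v)) (Set.Icc (-(1:ℝ)/2) (1/2)) :=
      hfvxC.comp (hmapcont v).continuousOn (fun y hy => hmemscale v hv y hy)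
    have h2 : ContinuousOn (fun y => fvv (r ^ (2 * v) * y, v)) (Set.Icc (-(1:ℝ)/2) (1/2)) :=
      hfvvC.comp (hmapcont v).continuousOn (fun y hy => hmemscale v hv y hy)
    exact (((continuous_const.mul continuous_id).continuousOn).mul h1).add h2
  -- dominated differentiation under the integral sign
  have hFint : IntervalIntegrable (Fam v₀) volume (-(1:ℝ)/2) (1/2) := by
    have h := hFamCont v₀ hv₀'
    rw [← Set.uIcc_of_le (by norm_num : -(1:ℝ)/2 ≤ 1/2)] at h
    exact h.intervalIntegrable
  have hmeas : ∀ᶠ v in nhds v₀, AEStronglyMeasurable (Fam v)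
      (volume.restrict (Set.uIoc (-(1:ℝ)/2) (1/2))) := by
    filter_upwards [Ioo_mem_nhds hv₀0 hv₀1] with v hv
    exact ((hFamCont v (Set.Ioo_subset_Icc_self hv)).mono hIsub).aestronglyMeasurable
      measurableSet_uIoc
  have hF'meas : AEStronglyMeasurable (Fam' v₀)
      (volume.restrict (Set.uIoc (-(1:ℝ)/2) (1/2))) :=
    ((hFam'Cont v₀ hv₀').mono hIsub).aestronglyMeasurable measurableSet_uIoc
  have hbound : ∀ᵐ y ∂(volume : Measure ℝ), y ∈ Set.uIoc (-(1:ℝ)/2) (1/2) →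
      ∀ v ∈ Metric.ball v₀ δ, ‖Fam' v y‖ ≤ M :=
    ae_of_all _ fun y hy v hv => hFam'_bound y hy v hv
  have hdiff : ∀ᵐ y ∂(volume : Measure ℝ), y ∈ Set.uIoc (-(1:ℝ)/2) (1/2) →
      ∀ v ∈ Metric.ball v₀ δ, HasDerivAt (fun v => Fam v y) (Fam' v y) v :=
    ae_of_all _ fun y hy v hv =>
      hFamDeriv y (hIsub hy) v (Set.Ioo_subset_Icc_self (hball v hv))
  have hMain := intervalIntegral.hasDerivAt_integral_of_dominated_loc_of_deriv_le
    (F := Fam) (F' := Fam') (x₀ := v₀) (a := -(1:ℝ)/2) (b := 1/2) (bound := fun _ => M)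
    (Metric.ball_mem_nhds v₀ hδpos) hmeas hFint hF'meas hbound intervalIntegrable_const hdiff
  have hGderiv := hMain.2
  -- local identification of the target function with the rescaled integral
  have hFeq : ∀ v ∈ Set.Ioo (0:ℝ) 1,
      r ^ (-(2 * v)) * (∫ x in (-(r ^ (2 * v)) / 2)..(r ^ (2 * v) / 2),
        deriv (fun w => θ x w) v) = ∫ y in (-(1:ℝ)/2)..(1/2), Fam v y := by
    intro v hv
    have hvI : v ∈ Set.Icc (0:ℝ) 1 := Set.Ioo_subset_Icc_self hv
    have hle : -(r ^ (2 * v)) / 2 ≤ r ^ (2 * v) / 2 := by linarith [hcpos v]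
    have h1 : (∫ x in (-(r ^ (2 * v)) / 2)..(r ^ (2 * v) / 2), deriv (fun w => θ x w) v)
        = ∫ x in (-(r ^ (2 * v)) / 2)..(r ^ (2 * v) / 2), fv (x, v) := by
      apply intervalIntegral.integral_congr
      intro x hx
      rw [Set.uIcc_of_le hle] at hx
      exact hdw x v (hΩ hvI hx)
    have h2 : (∫ y in (-(1:ℝ)/2)..(1/2), Fam v y)
        = (r ^ (2 * v))⁻¹ • ∫ x in (r ^ (2 * v) * (-(1:ℝ)/2))..(r ^ (2 * v) * (1/2)),
            fv (x, v) :=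
      intervalIntegral.integral_comp_mul_left (fun x => fv (x, v)) (ne_of_gt (hcpos v))
    rw [h1, h2, Real.rpow_neg hr0.le, smul_eq_mul,
      show r ^ (2 * v) * (-(1:ℝ)/2) = -(r ^ (2 * v)) / 2 by ring,
      show r ^ (2 * v) * ((1:ℝ)/2) = r ^ (2 * v) / 2 by ring]
  have hGeq : (fun v : ℝ => r ^ (-(2 * v)) *
      ∫ x in (-(r ^ (2 * v)) / 2)..(r ^ (2 * v) / 2), deriv (fun w => θ x w) v)
      =ᶠ[nhds v₀] fun v => ∫ y in (-(1:ℝ)/2)..(1/2), Fam v y := by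
    filter_upwards [Ioo_mem_nhds hv₀0 hv₀1] with v hv
    exact hFeq v hv
  have hFderiv : HasDerivAt (fun v : ℝ => r ^ (-(2 * v)) *
      ∫ x in (-(r ^ (2 * v)) / 2)..(r ^ (2 * v) / 2), deriv (fun w => θ x w) v)
      (∫ y in (-(1:ℝ)/2)..(1/2), Fam' v₀ y) v₀ := hGderiv.congr_of_eventuallyEq hGeq
  -- endgame: identify the derivative value
  set l : ℝ := (-c₀) / 2 with hl_def
  set u : ℝ := c₀ / 2 with hu_def
  have hlu : l ≤ u := by rw [hl_def, hu_def]; linarith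
  have hmemline : ∀ x ∈ Set.Icc l u, (x, v₀) ∈ U := by
    intro x hx
    exact hΩ hv₀' hx
  have hcontline : ∀ g : ℝ × ℝ → ℝ, ContinuousOn g U →
      ContinuousOn (fun x => g (x, v₀)) (Set.Icc l u) := by
    intro g hg
    exact hg.comp (Continuous.continuousOn (by fun_prop)) (fun x hx => hmemline x hx)
  have hii : ∀ g : ℝ → ℝ, ContinuousOn g (Set.Icc l u) → IntervalIntegrable g volume l u := by
    intro g hg
    rw [← Set.uIcc_of_le hlu] at hg
    exact hg.intervalIntegrable
  have hI1 := intervalIntegral.integral_eq_sub_of_hasDerivAt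
    (f := fun s => s * fv (s, v₀)) (f' := fun x => fv (x, v₀) + x * fvx (x, v₀))
    (a := l) (b := u)
    (by
      intro x hx
      rw [Set.uIcc_of_le hlu] at hx
      have hxU := hmemline x hx
      have h := (hasDerivAt_id' (x := x)).mul (hderiv_fv_s x v₀ hxU)
      exact h.congr_deriv (by simp))
    (hii _ ((hcontline fv hfvC.continuousOn).add
      ((continuous_id.continuousOn).mul (hcontline fvx hfvxC))))
  have hI2 := intervalIntegral.integral_eq_sub_of_hasDerivAt
    (f := fun s => fx (s, v₀)) (f' := fun x => fxx (x, v₀)) (a := l) (b := u)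
    (fun x hx => hderiv_fx_s x v₀ (hmemline x (by rwa [Set.uIcc_of_le hlu] at hx)))
    (hii _ (hcontline fxx hfxxC))
  have hvv_eq : ∀ x ∈ Set.Icc l u, fvv (x, v₀) =
      -(3/4) * L^2 * θ x v₀ - 2 * L * fv (x, v₀) - L^2 * c₀ * fxx (x, v₀) / ε^2 := by
    intro x hx
    have hxU := hmemline x hx
    have E := hint v₀ hv₀' x hx
    rw [hdss x v₀ hxU, hdw x v₀ hxU, hdww x v₀ hxU] at E
    rw [← hc₀] at E
    field_simp at E ⊢
    have E3 : 4*(c₀*fxx (x, v₀))*L^2 + ε^2*(3*θ x v₀*L^2 + 8*fv (x, v₀)*L + 4*fvv (x, v₀)) = 0 := by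
      apply mul_left_cancel₀ hL0
      rw [mul_zero]
      linear_combination L * E
    linear_combination E3
  have hEq2 : Set.EqOn (fun x => 2 * Real.log r * x * fvx (x, v₀) + fvv (x, v₀))
      (fun x => 2 * Real.log r * (fv (x, v₀) + x * fvx (x, v₀)) +
        (-(3/4) * L^2 * θ x v₀ - L^2 * c₀ / ε^2 * fxx (x, v₀))) (Set.uIcc l u) := by
    intro x hx
    rw [Set.uIcc_of_le hlu] at hx
    have h1 := hvv_eq x hx
    have h2 : Real.log r = -L := by rw [hL]; ring
    simp only
    rw [h1, h2]
    field_simp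
    ring
  have hsplit : (∫ x in l..u, (2 * Real.log r * x * fvx (x, v₀) + fvv (x, v₀)))
      = 2 * Real.log r * (u * fv (u, v₀) - l * fv (l, v₀))
        + (-(3/4) * L^2 * (∫ x in l..u, θ x v₀)
          - L^2 * c₀ / ε^2 * (fx (u, v₀) - fx (l, v₀))) := by
    rw [intervalIntegral.integral_congr hEq2]
    have hint1 : IntervalIntegrable
        (fun x => 2 * Real.log r * (fv (x, v₀) + x * fvx (x, v₀))) volume l u :=
      hii _ (continuousOn_const.mul ((hcontline fv hfvC.continuousOn).add
        ((continuous_id.continuousOn).mul (hcontline fvx hfvxC))))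
    have hθline : ContinuousOn (fun x => θ x v₀) (Set.Icc l u) :=
      hcontline f hθ.continuousOn
    have hint3 : IntervalIntegrable (fun x => -(3/4) * L^2 * θ x v₀) volume l u :=
      hii _ (continuousOn_const.mul hθline)
    have hint4 : IntervalIntegrable (fun x => L^2 * c₀ / ε^2 * fxx (x, v₀)) volume l u :=
      hii _ (continuousOn_const.mul (hcontline fxx hfxxC))
    rw [intervalIntegral.integral_add hint1 (hint3.sub hint4),
      intervalIntegral.integral_sub hint3 hint4,
      intervalIntegral.integral_const_mul, intervalIntegral.integral_const_mul,
      intervalIntegral.integral_const_mul, hI1, hI2]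
  have hchg : (∫ y in (-(1:ℝ)/2)..(1/2), Fam' v₀ y)
      = c₀⁻¹ * ∫ x in l..u, (2 * Real.log r * x * fvx (x, v₀) + fvv (x, v₀)) := by
    have h0 : (∫ y in (-(1:ℝ)/2)..(1/2), Fam' v₀ y)
        = ∫ y in (-(1:ℝ)/2)..(1/2),
            (fun x => 2 * Real.log r * x * fvx (x, v₀) + fvv (x, v₀)) (c₀ * y) := by
      apply intervalIntegral.integral_congr
      intro y _
      show Fam' v₀ y = _
      rw [hFam'_def]
      simp only [← hc₀]
      ring_nf
    have h1 := intervalIntegral.integral_comp_mul_left (a := -(1:ℝ)/2) (b := 1/2)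
      (fun x => 2 * Real.log r * x * fvx (x, v₀) + fvv (x, v₀)) hc₀ne
    rw [show c₀ * (-(1:ℝ)/2) = l by rw [hl_def]; ring,
      show c₀ * ((1:ℝ)/2) = u by rw [hu_def]; ring, smul_eq_mul] at h1
    exact h0.trans h1
  -- boundary conditions
  have hUu : (u, v₀) ∈ U := hmemline u ⟨hlu, le_refl u⟩
  have hUl : (l, v₀) ∈ U := hmemline l ⟨le_refl l, hlu⟩
  have hB1 := hbdryPlus v₀ hv₀'
  have hB2 := hbdryMinus v₀ hv₀'
  rw [← hc₀] at hB1 hB2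
  rw [← hu_def] at hB1
  rw [← hl_def] at hB2
  rw [hds u v₀ hUu, hdw u v₀ hUu] at hB1
  rw [hds l v₀ hUl, hdw l v₀ hUl] at hB2
  have hfxdiff : fx (u, v₀) - fx (l, v₀)
      = ε^2 * Real.sqrt (1 + ε^2 * c₀) * (σ/t) * (θ u v₀ + θ l v₀)
        - ε^2 * (θ u v₀ + θ l v₀) / 2 - ε^2 * (fv (u, v₀) + fv (l, v₀)) / L := by
    linear_combination hB1 + hB2
  -- conclude
  convert hFderiv using 1
  rw [hchg, hsplit, hfxdiff]
  have hlr : Real.log r = -L := by rw [hL]; ring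
  rw [hlr, Real.rpow_neg hr0.le, ← hc₀, hu_def, hl_def]
  field_simp
  ring
end
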